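/- The degree-one Lebesgue constant Λ₁ = max_{‖y‖₂ ≤ 1} ‖λ(y)‖₁ for interpolation at the rows of X_d on the unit ball of ℝ^d equals max over sign vectors ε ∈ {±1}^{d+1} of (1/(d+1))·( s + √d · √((d+1)² − s²) ), where s := Σ_{j=1}^{d+1} ε_j. -/

import Mathlib

open Matrix

/-- The recursively defined matrix `X_d ∈ ℝ^{(d+1)×d}` whose rows are the vertices of a
regular simplex inscribed in the unit sphere of `ℝ^d`:  `X_1 = (-1; 1)`, and for `d > 1`,
the top-left `d × (d-1)` block of `X_d` is `R_d • X_{d-1}` with `R_d = √(d²-1)/d`, the last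
column has its first `d` entries equal to `-1/d` and last entry `1`, and the last row is
`(0, …, 0, 1)`. -/
noncomputable def simplexPts : (d : ℕ) → Matrix (Fin (d + 1)) (Fin d) ℝ
  | 0 => fun _ j => j.elim0
  | 1 => fun i _ => if (i : ℕ) = 0 then -1 else 1
  | (d + 2) => fun i j =>
      if hj : (j : ℕ) < d + 1 then
        if hi : (i : ℕ) < d + 2 then
          (Real.sqrt (((d : ℝ) + 2) ^ 2 - 1) / ((d : ℝ) + 2)) *
            simplexPts (d + 1) ⟨i, hi⟩ ⟨j, hj⟩
        else 0
      else if (i : ℕ) < d + 2 then -1 / ((d : ℝ) + 2) else 1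

theorem simplex_gram : ∀ (d : ℕ), 1 ≤ d → ∀ i j : Fin (d + 1),
    (∑ k : Fin d, simplexPts d i k * simplexPts d j k) =
      if i = j then 1 else -1 / (d : ℝ)
  | 0, h => by omega
  | 1, _ => by
      intro i j
      fin_cases i <;> fin_cases j <;>
        simp [simplexPts, Fin.sum_univ_succ] <;> norm_num
  | (d + 2), _ => by
      intro i j
      have IH := simplex_gram (d + 1) (by omega)
      set R : ℝ := Real.sqrt (((d : ℝ) + 2) ^ 2 - 1) / ((d : ℝ) + 2) with hRdef
      have hR : R ^ 2 = (((d : ℝ) + 2) ^ 2 - 1) / ((d : ℝ) + 2) ^ 2 := by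
        rw [hRdef, div_pow, Real.sq_sqrt (by nlinarith [Nat.cast_nonneg (α := ℝ) d])]
      have hcol : ∀ (i : Fin (d + 3)) (k : Fin (d + 1)),
          simplexPts (d + 2) i k.castSucc =
            if hi : (i : ℕ) < d + 2 then R * simplexPts (d + 1) ⟨i, hi⟩ ⟨k, k.isLt⟩
            else 0 := by
        intro i k
        simp [simplexPts, k.isLt, hRdef]
      have hlast : ∀ (i : Fin (d + 3)),
          simplexPts (d + 2) i (Fin.last (d + 1)) =
            if (i : ℕ) < d + 2 then -1 / ((d : ℝ) + 2) else 1 := by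
        intro i
        simp [simplexPts]
      rw [Fin.sum_univ_castSucc]
      simp only [hcol, hlast]
      rcases Nat.lt_or_ge (i : ℕ) (d + 2) with hi | hi <;>
        rcases Nat.lt_or_ge (j : ℕ) (d + 2) with hj | hj
      · simp only [dif_pos hi, dif_pos hj, if_pos hi, if_pos hj]
        have : ∀ k : Fin (d + 1),
            R * simplexPts (d + 1) ⟨i, hi⟩ ⟨k, k.isLt⟩ *
              (R * simplexPts (d + 1) ⟨j, hj⟩ ⟨k, k.isLt⟩) =
            R ^ 2 * (simplexPts (d + 1) ⟨i, hi⟩ ⟨k, k.isLt⟩ *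
              simplexPts (d + 1) ⟨j, hj⟩ ⟨k, k.isLt⟩) := by intro k; ring
        rw [Finset.sum_congr rfl (fun k _ => this k), ← Finset.mul_sum]
        have hsum : (∑ k : Fin (d + 1), simplexPts (d + 1) ⟨i, hi⟩ ⟨k, k.isLt⟩ *
            simplexPts (d + 1) ⟨j, hj⟩ ⟨k, k.isLt⟩) =
            if (⟨i, hi⟩ : Fin (d + 2)) = ⟨j, hj⟩ then 1 else -1 / ((d : ℝ) + 1) := by
          have := IH ⟨i, hi⟩ ⟨j, hj⟩
          push_cast at this
          rw [← this]
        rw [hsum]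
        have hij : (i = j) ↔ ((⟨i, hi⟩ : Fin (d + 2)) = ⟨j, hj⟩) := by
          simp [Fin.ext_iff]
        by_cases h : i = j
        · rw [if_pos h, if_pos (hij.mp h), hR]
          have : ((d : ℝ) + 2) ≠ 0 := by positivity
          field_simp
          ring
        · rw [if_neg h, if_neg (fun hc => h (hij.mpr hc)), hR]
          have h2 : ((d : ℝ) + 2) ≠ 0 := by positivity
          have h1 : ((d : ℝ) + 1) ≠ 0 := by positivity
          field_simp
          push_cast; ring
      · have hij : i ≠ j := Fin.ne_of_val_ne (by omega)
        have hj' : ¬ (j : ℕ) < d + 2 := by omega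
        simp only [dif_pos hi, dif_neg hj', if_pos hi, if_neg hj', if_neg hij,
          mul_zero, Finset.sum_const_zero, zero_add, mul_one]
        push_cast; ring
      · have hij : i ≠ j := Fin.ne_of_val_ne (by omega)
        have hi' : ¬ (i : ℕ) < d + 2 := by omega
        simp only [dif_pos hj, dif_neg hi', if_pos hj, if_neg hi', if_neg hij,
          zero_mul, Finset.sum_const_zero, zero_add, one_mul]
        push_cast; ring
      · have hij : i = j := Fin.ext (by omega)
        have hi' : ¬ (i : ℕ) < d + 2 := by omega
        have hj' : ¬ (j : ℕ) < d + 2 := by omega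
        simp only [dif_neg hi', dif_neg hj', if_neg hi', if_neg hj', if_pos hij,
          zero_mul, Finset.sum_const_zero, zero_add, one_mul]

/-- The barycentric coordinates of `y ∈ ℝ^d` with respect to the rows of `X_d`:
`λ(y) = (1/(d+1)) 𝟙_{d+1} + (d/(d+1)) X_d y`.  These are also the values at `y` of the
degree-one fundamental Lagrange polynomials for interpolation at the rows of `X_d`. -/
noncomputable def bary (d : ℕ) (y : Fin d → ℝ) : Fin (d + 1) → ℝ :=
  fun i => 1 / ((d : ℝ) + 1) + ((d : ℝ) / ((d : ℝ) + 1)) * (simplexPts d *ᵥ y) i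

lemma sum_eps_bary (d : ℕ) (ε : Fin (d + 1) → ℝ) (y : Fin d → ℝ) :
    ∑ j, ε j * bary d y j =
      (∑ j, ε j) / ((d : ℝ) + 1) +
        ((d : ℝ) / ((d : ℝ) + 1)) * ∑ k, (∑ j, ε j * simplexPts d j k) * y k := by
  simp only [bary, Matrix.mulVec, dotProduct]
  rw [Finset.sum_div]
  rw [show ∑ k : Fin d, (∑ j, ε j * simplexPts d j k) * y k
      = ∑ j : Fin (d+1), ∑ k : Fin d, ε j * (simplexPts d j k * y k) by
    rw [Finset.sum_comm]
    apply Finset.sum_congr rfl; intro k _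
    rw [Finset.sum_mul]
    apply Finset.sum_congr rfl; intro j _; ring]
  rw [Finset.mul_sum, ← Finset.sum_add_distrib]
  apply Finset.sum_congr rfl; intro j _
  rw [mul_add, Finset.mul_sum]
  congr 1
  · ring
  · simp only [Finset.mul_sum]
    exact Finset.sum_congr rfl (fun k _ => by ring)

lemma quad_form (d : ℕ) (hd : 1 ≤ d) (ε : Fin (d + 1) → ℝ) (hε : ∀ j, ε j = 1 ∨ ε j = -1) :
    ∑ k : Fin d, (∑ j, ε j * simplexPts d j k) ^ 2 =
      (((d : ℝ) + 1) ^ 2 - (∑ j, ε j) ^ 2) / d := by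
  have hsq : ∀ j, ε j ^ 2 = 1 := by
    intro j; rcases hε j with h | h <;> rw [h] <;> norm_num
  have step1 : ∑ k : Fin d, (∑ j, ε j * simplexPts d j k) ^ 2 =
      ∑ j : Fin (d+1), ∑ i : Fin (d+1),
        ε j * ε i * ∑ k : Fin d, simplexPts d j k * simplexPts d i k := by
    calc ∑ k : Fin d, (∑ j, ε j * simplexPts d j k) ^ 2
        = ∑ k : Fin d, ∑ j : Fin (d+1), ∑ i : Fin (d+1),
            (ε j * simplexPts d j k) * (ε i * simplexPts d i k) := by
          apply Finset.sum_congr rfl; intro k _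
          rw [sq, Finset.sum_mul_sum]
      _ = ∑ j : Fin (d+1), ∑ k : Fin d, ∑ i : Fin (d+1),
            (ε j * simplexPts d j k) * (ε i * simplexPts d i k) := Finset.sum_comm
      _ = ∑ j : Fin (d+1), ∑ i : Fin (d+1), ∑ k : Fin d,
            (ε j * simplexPts d j k) * (ε i * simplexPts d i k) := by
          apply Finset.sum_congr rfl; intro j _; exact Finset.sum_comm
      _ = ∑ j : Fin (d+1), ∑ i : Fin (d+1),
            ε j * ε i * ∑ k : Fin d, simplexPts d j k * simplexPts d i k := by
          apply Finset.sum_congr rfl; intro j _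
          apply Finset.sum_congr rfl; intro i _
          rw [Finset.mul_sum]
          apply Finset.sum_congr rfl; intro k _; ring
  rw [step1]
  have step2 : ∀ j i : Fin (d+1),
      ε j * ε i * ∑ k : Fin d, simplexPts d j k * simplexPts d i k =
        (if j = i then ε j * ε i * (1 + 1/(d:ℝ)) else 0) - ε j * ε i / d := by
    intro j i
    rw [simplex_gram d hd j i]
    by_cases h : j = i
    · rw [if_pos h, if_pos h]
      have : (d:ℝ) ≠ 0 := by positivity
      field_simp
      ring
    · rw [if_neg h, if_neg h]; ring
  simp only [step2]
  rw [Finset.sum_congr rfl (fun j _ => Finset.sum_sub_distrib _ _), Finset.sum_sub_distrib]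
  have e1 : ∑ j : Fin (d+1), ∑ i : Fin (d+1),
      (if j = i then ε j * ε i * (1 + 1/(d:ℝ)) else 0) = ((d:ℝ)+1) * (1 + 1/(d:ℝ)) := by
    rw [Finset.sum_congr rfl (fun j _ => Finset.sum_ite_eq (Finset.univ) j
      (fun i => ε j * ε i * (1 + 1/(d:ℝ))))]
    simp only [Finset.mem_univ, if_pos, ← sq, hsq]
    simp [Finset.sum_const, Finset.card_univ]
    ring
  have e2 : ∑ j : Fin (d+1), ∑ i : Fin (d+1), ε j * ε i / (d:ℝ)
      = (∑ j, ε j) ^ 2 / d := by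
    rw [sq, Finset.sum_mul_sum, Finset.sum_div]
    apply Finset.sum_congr rfl; intro j _
    rw [Finset.sum_div]
  rw [e1, e2]
  have : (d:ℝ) ≠ 0 := by positivity
  field_simp

lemma sqrt_term (d : ℕ) (hd : 1 ≤ d) (s : ℝ) (hs : 0 ≤ ((d:ℝ)+1)^2 - s^2) :
    ((d : ℝ) / ((d : ℝ) + 1)) * Real.sqrt ((((d:ℝ)+1)^2 - s^2) / d)
      = Real.sqrt d * Real.sqrt (((d:ℝ)+1)^2 - s^2) / ((d:ℝ)+1) := by
  have hd0 : (0:ℝ) < d := by exact_mod_cast hd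
  rw [Real.sqrt_div hs]
  have hu : Real.sqrt d * Real.sqrt d = (d:ℝ) := Real.mul_self_sqrt hd0.le
  set a := Real.sqrt (((d:ℝ)+1)^2 - s^2) with ha
  calc ((d : ℝ) / ((d : ℝ) + 1)) * (a / Real.sqrt d)
      = ((d:ℝ) / Real.sqrt d) * a / ((d:ℝ)+1) := by ring
    _ = Real.sqrt d * a / ((d:ℝ)+1) := by rw [Real.div_sqrt]

lemma sum_sign_abs_le (d : ℕ) (ε : Fin (d+1) → ℝ) (hsign : ∀ j, ε j = 1 ∨ ε j = -1) :
    |∑ j, ε j| ≤ (d:ℝ)+1 := by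
  calc |∑ j, ε j| ≤ ∑ j, |ε j| := Finset.abs_sum_le_sum_abs _ _
    _ = ∑ _j : Fin (d+1), (1:ℝ) :=
        Finset.sum_congr rfl (fun j _ => by rcases hsign j with h|h <;> rw [h] <;> simp)
    _ = (d:ℝ)+1 := by simp


/-- the degree-one Lebesgue constant `Λ₁ = max_{‖y‖₂ ≤ 1} ‖λ(y)‖₁` for
interpolation at the rows of `X_d` on the unit ball of `ℝ^d` equals the maximum over sign
vectors `ε ∈ {±1}^{d+1}` of `(s + √d ⬝ √((d+1)² - s²)) / (d+1)` where `s = ∑ⱼ εⱼ`. -/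
theorem lebesgue_constant_eq_sign_max (d : ℕ) (hd : 1 ≤ d) :
    sSup {t : ℝ | ∃ y : Fin d → ℝ, Real.sqrt (∑ k : Fin d, y k ^ 2) ≤ 1 ∧
        t = ∑ j : Fin (d + 1), |bary d y j|} =
      sSup {t : ℝ | ∃ ε : Fin (d + 1) → ℝ, (∀ j, ε j = 1 ∨ ε j = -1) ∧
        t = ((∑ j : Fin (d + 1), ε j) +
              Real.sqrt d * Real.sqrt (((d : ℝ) + 1) ^ 2 - (∑ j : Fin (d + 1), ε j) ^ 2)) /
            ((d : ℝ) + 1)} := by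
  have hd0 : (0:ℝ) < d := by exact_mod_cast hd
  have hd1 : (0:ℝ) < (d:ℝ) + 1 := by positivity
  set A := {t : ℝ | ∃ y : Fin d → ℝ, Real.sqrt (∑ k : Fin d, y k ^ 2) ≤ 1 ∧
      t = ∑ j : Fin (d + 1), |bary d y j|} with hAdef
  set B := {t : ℝ | ∃ ε : Fin (d + 1) → ℝ, (∀ j, ε j = 1 ∨ ε j = -1) ∧
      t = ((∑ j : Fin (d + 1), ε j) +
            Real.sqrt d * Real.sqrt (((d : ℝ) + 1) ^ 2 - (∑ j : Fin (d + 1), ε j) ^ 2)) /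
          ((d : ℝ) + 1)} with hBdef
  -- B is bounded above by 1 + √d
  have hBle : ∀ t ∈ B, t ≤ 1 + Real.sqrt d := by
    rintro t ⟨ε, hsign, rfl⟩
    have hs1 : |∑ j, ε j| ≤ (d:ℝ) + 1 := sum_sign_abs_le d ε hsign
    have hsq : (∑ j, ε j)^2 ≤ ((d:ℝ)+1)^2 := by
      rw [← sq_abs]; exact pow_le_pow_left₀ (abs_nonneg _) hs1 2
    have hsqrt : Real.sqrt (((d:ℝ)+1)^2 - (∑ j, ε j)^2) ≤ (d:ℝ)+1 := by
      calc Real.sqrt (((d:ℝ)+1)^2 - (∑ j, ε j)^2) ≤ Real.sqrt (((d:ℝ)+1)^2) :=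
          Real.sqrt_le_sqrt (by nlinarith [sq_nonneg (∑ j, ε j)])
        _ = (d:ℝ)+1 := Real.sqrt_sq hd1.le
    rw [div_le_iff₀ hd1]
    have := le_trans (le_abs_self _) hs1
    nlinarith [Real.sqrt_nonneg (d:ℝ)]
  have hBbdd : BddAbove B := ⟨1 + Real.sqrt d, hBle⟩
  have hBne : B.Nonempty := ⟨_, fun _ => 1, fun _ => Or.inl rfl, rfl⟩
  -- 1 ∈ A (take y = 0)
  have h1A : (1:ℝ) ∈ A := by
    refine ⟨fun _ => 0, by simp, ?_⟩
    have hb0 : ∀ j : Fin (d+1), bary d (fun _ => (0:ℝ)) j = 1/((d:ℝ)+1) := by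
      intro j; simp [bary, Matrix.mulVec, dotProduct]
    rw [Finset.sum_congr rfl (fun j _ => by rw [hb0 j, abs_of_nonneg (by positivity)])]
    rw [Finset.sum_const, Finset.card_univ, Fintype.card_fin, nsmul_eq_mul]
    push_cast
    field_simp
  -- Every element of A is dominated by an element of B
  have hAB : ∀ t ∈ A, ∃ b ∈ B, t ≤ b := by
    rintro t ⟨y, hy, rfl⟩
    set ε : Fin (d+1) → ℝ := fun j => if 0 ≤ bary d y j then 1 else -1 with hεdef
    have hsign : ∀ j, ε j = 1 ∨ ε j = -1 := by
      intro j; by_cases h : 0 ≤ bary d y j <;> simp [hεdef, h]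
    have habs : ∀ j, |bary d y j| = ε j * bary d y j := by
      intro j; by_cases h : 0 ≤ bary d y j
      · rw [hεdef]; simp only [if_pos h, one_mul]; exact abs_of_nonneg h
      · rw [hεdef]; simp only [if_neg h]
        rw [abs_of_neg (not_le.mp h)]; ring
    have hquad := quad_form d hd ε hsign
    have hw0 : 0 ≤ ∑ k, (∑ j, ε j * simplexPts d j k) ^ 2 :=
      Finset.sum_nonneg fun k _ => sq_nonneg _
    have hw0' : 0 ≤ (((d:ℝ)+1)^2 - (∑ j, ε j)^2)/(d:ℝ) := hquad ▸ hw0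
    have hpos : 0 ≤ ((d:ℝ)+1)^2 - (∑ j, ε j)^2 := by
      have h4 := mul_nonneg hw0' hd0.le
      rwa [div_mul_cancel₀ _ (ne_of_gt hd0)] at h4
    have hy2 : ∑ k, y k ^ 2 ≤ 1 := by
      have h0 : 0 ≤ ∑ k, y k ^ 2 := Finset.sum_nonneg fun k _ => sq_nonneg _
      calc ∑ k, y k ^ 2 = (Real.sqrt (∑ k, y k ^ 2))^2 := (Real.sq_sqrt h0).symm
        _ ≤ 1^2 := pow_le_pow_left₀ (Real.sqrt_nonneg _) hy 2
        _ = 1 := one_pow 2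
    have hcs : ∑ k, (∑ j, ε j * simplexPts d j k) * y k ≤
        Real.sqrt ((((d:ℝ)+1)^2 - (∑ j, ε j)^2)/(d:ℝ)) := by
      calc ∑ k, (∑ j, ε j * simplexPts d j k) * y k
          ≤ |∑ k, (∑ j, ε j * simplexPts d j k) * y k| := le_abs_self _
        _ = Real.sqrt ((∑ k, (∑ j, ε j * simplexPts d j k) * y k)^2) :=
            (Real.sqrt_sq_eq_abs _).symm
        _ ≤ Real.sqrt ((∑ k, (∑ j, ε j * simplexPts d j k)^2) * ∑ k, y k^2) :=
            Real.sqrt_le_sqrt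
              (Finset.sum_mul_sq_le_sq_mul_sq Finset.univ
                (fun k => ∑ j, ε j * simplexPts d j k) y)
        _ ≤ Real.sqrt (∑ k, (∑ j, ε j * simplexPts d j k)^2) :=
            Real.sqrt_le_sqrt (mul_le_of_le_one_right hw0 hy2)
        _ = Real.sqrt ((((d:ℝ)+1)^2 - (∑ j, ε j)^2)/(d:ℝ)) := by rw [hquad]
    refine ⟨((∑ j, ε j) +
        Real.sqrt d * Real.sqrt (((d:ℝ)+1)^2 - (∑ j, ε j)^2))/((d:ℝ)+1),
      ⟨ε, hsign, rfl⟩, ?_⟩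
    have ht : ∑ j, |bary d y j| = (∑ j, ε j)/((d:ℝ)+1) +
        ((d:ℝ)/((d:ℝ)+1)) * ∑ k, (∑ j, ε j * simplexPts d j k) * y k :=
      (Finset.sum_congr rfl (fun j _ => habs j)).trans (sum_eps_bary d ε y)
    rw [ht, add_div]
    have h3 : ((d:ℝ)/((d:ℝ)+1)) * ∑ k, (∑ j, ε j * simplexPts d j k) * y k ≤
        Real.sqrt d * Real.sqrt (((d:ℝ)+1)^2 - (∑ j, ε j)^2) / ((d:ℝ)+1) := by
      rw [← sqrt_term d hd (∑ j, ε j) hpos]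
      exact mul_le_mul_of_nonneg_left hcs (by positivity)
    linarith
  have hAbdd : BddAbove A := by
    refine ⟨1 + Real.sqrt d, fun t ht => ?_⟩
    obtain ⟨b, hbB, htb⟩ := hAB t ht
    exact htb.trans (hBle b hbB)
  have hAne : A.Nonempty := ⟨1, h1A⟩
  -- Every element of B is dominated by an element of A
  have hBA : ∀ t ∈ B, ∃ a ∈ A, t ≤ a := by
    rintro t ⟨ε, hsign, rfl⟩
    have hquad := quad_form d hd ε hsign
    have hw0 : 0 ≤ ∑ k, (∑ j, ε j * simplexPts d j k) ^ 2 :=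
      Finset.sum_nonneg fun k _ => sq_nonneg _
    have hw0' : 0 ≤ (((d:ℝ)+1)^2 - (∑ j, ε j)^2)/(d:ℝ) := hquad ▸ hw0
    have hpos : 0 ≤ ((d:ℝ)+1)^2 - (∑ j, ε j)^2 := by
      have h4 := mul_nonneg hw0' hd0.le
      rwa [div_mul_cancel₀ _ (ne_of_gt hd0)] at h4
    by_cases hzero : ((d:ℝ)+1)^2 - (∑ j, ε j)^2 = 0
    · refine ⟨1, h1A, ?_⟩
      rw [hzero, Real.sqrt_zero, mul_zero, add_zero, div_le_one hd1]
      exact le_trans (le_abs_self _) (sum_sign_abs_le d ε hsign)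
    · have hSpos : 0 < (((d:ℝ)+1)^2 - (∑ j, ε j)^2)/(d:ℝ) :=
        div_pos (lt_of_le_of_ne hpos (Ne.symm hzero)) hd0
      set y : Fin d → ℝ := fun k => (∑ j, ε j * simplexPts d j k) /
        Real.sqrt ((((d:ℝ)+1)^2 - (∑ j, ε j)^2)/(d:ℝ)) with hydef
      have hyS : ∑ k, y k ^ 2 = 1 := by
        simp only [hydef, div_pow]
        rw [← Finset.sum_div, Real.sq_sqrt hSpos.le, hquad]
        exact div_self (ne_of_gt hSpos)
      have hy1 : Real.sqrt (∑ k, y k ^ 2) ≤ 1 := by rw [hyS, Real.sqrt_one]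
      have hwy : ∑ k, (∑ j, ε j * simplexPts d j k) * y k =
          Real.sqrt ((((d:ℝ)+1)^2 - (∑ j, ε j)^2)/(d:ℝ)) := by
        simp only [hydef]
        rw [show ∑ k, (∑ j, ε j * simplexPts d j k) *
              ((∑ j, ε j * simplexPts d j k) /
                Real.sqrt ((((d:ℝ)+1)^2 - (∑ j, ε j)^2)/(d:ℝ))) =
            (∑ k, (∑ j, ε j * simplexPts d j k)^2) /
              Real.sqrt ((((d:ℝ)+1)^2 - (∑ j, ε j)^2)/(d:ℝ)) by
          rw [Finset.sum_div]
          exact Finset.sum_congr rfl (fun k _ => by rw [sq]; ring)]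
        rw [hquad]
        exact Real.div_sqrt
      have hval : ((∑ j, ε j) +
            Real.sqrt d * Real.sqrt (((d:ℝ)+1)^2 - (∑ j, ε j)^2))/((d:ℝ)+1) =
          ∑ j, ε j * bary d y j := by
        rw [sum_eps_bary d ε y, hwy, add_div]
        congr 1
        rw [← sqrt_term d hd (∑ j, ε j) hpos]
      refine ⟨∑ j, |bary d y j|, ⟨y, hy1, rfl⟩, ?_⟩
      rw [hval]
      apply Finset.sum_le_sum
      intro j _
      rcases hsign j with h | h
      · rw [h, one_mul]; exact le_abs_self _
      · rw [h, neg_one_mul]; exact neg_le_abs _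
  apply le_antisymm
  · apply csSup_le hAne
    intro t ht
    obtain ⟨b, hbB, htb⟩ := hAB t ht
    exact htb.trans (le_csSup hBbdd hbB)
  · apply csSup_le hBne
    intro t ht
    obtain ⟨a, haA, hta⟩ := hBA t ht
    exact hta.trans (le_csSup hAbdd haA)
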